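/- Let V, V' ⊆ {1,…,N} be nonempty with V ∩ V' = ∅, let a ∈ 𝔸_V, let a', ã' ∈ 𝔸_{V'}, and let c ∈ ℝ^N have strictly positive entries. If N^eff(a',c) ≤ N^eff(ã',c), then N^eff(a+a',c) ≤ N^eff(a+ã',c); moreover, under this hypothesis, N^eff(a+a',c) = N^eff(a+ã',c) implies N^eff(a',c) = N^eff(ã',c). -/
import Mathlib


open Finset

def memA {N : ℕ} (V : Finset (Fin N)) (a : Matrix (Fin N) (Fin N) ℝ) : Prop :=
  (∀ i j, 0 ≤ a i j) ∧
  (∀ i j, (i ∉ V ∨ j ∉ V) → a i j = 0) ∧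
  (∀ i ∈ V, ∑ j, a i j = 1) ∧
  (∀ j ∈ V, ∑ i, a i j = 1)

noncomputable def Neff {N : ℕ} (a : Matrix (Fin N) (Fin N) ℝ) (c : Fin N → ℝ) : ℝ :=
  (∑ i, ∑ j, a i j * c j) ^ 2 / (∑ i, (∑ j, a i j * c j) ^ 2)

lemma rowZero {N : ℕ} {V : Finset (Fin N)} {a : Matrix (Fin N) (Fin N) ℝ}
    (ha : memA V a) (c : Fin N → ℝ) {i : Fin N} (hi : i ∉ V) :
    ∑ j, a i j * c j = 0 :=
  Finset.sum_eq_zero fun j _ => by rw [ha.2.1 i j (Or.inl hi), zero_mul]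

lemma rowPos {N : ℕ} {V : Finset (Fin N)} {a : Matrix (Fin N) (Fin N) ℝ}
    (ha : memA V a) (c : Fin N → ℝ) (hc : ∀ j, 0 < c j) {i : Fin N} (hi : i ∈ V) :
    0 < ∑ j, a i j * c j := by
  have h1 : ∑ j, a i j = 1 := ha.2.2.1 i hi
  obtain ⟨j, hj⟩ : ∃ j, a i j ≠ 0 := by
    by_contra hcon; push_neg at hcon
    rw [Finset.sum_eq_zero fun j _ => hcon j] at h1; norm_num at h1
  have hj' : 0 < a i j := lt_of_le_of_ne (ha.1 i j) (Ne.symm hj)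
  calc (0:ℝ) < a i j * c j := mul_pos hj' (hc j)
    _ ≤ ∑ j, a i j * c j :=
        Finset.single_le_sum (fun k _ => mul_nonneg (ha.1 i k) (hc k).le) (mem_univ j)

lemma sumRows {N : ℕ} {V : Finset (Fin N)} {a : Matrix (Fin N) (Fin N) ℝ}
    (ha : memA V a) (c : Fin N → ℝ) :
    ∑ i, ∑ j, a i j * c j = ∑ j ∈ V, c j := by
  rw [Finset.sum_comm]
  have h1 : ∀ j : Fin N, ∑ i, a i j * c j = (∑ i, a i j) * c j := fun j =>
    (Finset.sum_mul _ _ _).symm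
  simp_rw [h1]
  rw [← Finset.sum_subset (Finset.subset_univ V)
    (fun j _ hj => by
      rw [Finset.sum_eq_zero fun i _ => ha.2.1 i j (Or.inr hj), zero_mul])]
  exact Finset.sum_congr rfl fun j hj => by rw [ha.2.2.2 j hj, one_mul]

lemma Qpos {N : ℕ} {V : Finset (Fin N)} {a : Matrix (Fin N) (Fin N) ℝ}
    (ha : memA V a) (hV : V.Nonempty) (c : Fin N → ℝ) (hc : ∀ j, 0 < c j) :
    0 < ∑ i, (∑ j, a i j * c j) ^ 2 := by
  obtain ⟨i, hi⟩ := hV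
  calc (0:ℝ) < (∑ j, a i j * c j) ^ 2 := pow_pos (rowPos ha c hc hi) 2
    _ ≤ ∑ i, (∑ j, a i j * c j) ^ 2 :=
        Finset.single_le_sum (f := fun i => (∑ j, a i j * c j) ^ 2)
          (fun k _ => sq_nonneg _) (mem_univ i)

/-- Monotonicity of the effective sample size: here `b'` plays the role of `ã'`. -/
theorem stmt_5 {N : ℕ} (hN : 1 ≤ N) (V V' : Finset (Fin N))
    (hV : V.Nonempty) (hV' : V'.Nonempty) (hdisj : Disjoint V V')
    (a : Matrix (Fin N) (Fin N) ℝ) (ha : memA V a)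
    (a' b' : Matrix (Fin N) (Fin N) ℝ) (ha' : memA V' a') (hb' : memA V' b')
    (c : Fin N → ℝ) (hc : ∀ j, 0 < c j)
    (h : Neff a' c ≤ Neff b' c) :
    Neff (a + a') c ≤ Neff (a + b') c ∧
    (Neff (a + a') c = Neff (a + b') c → Neff a' c = Neff b' c) := by
  set S : ℝ := ∑ j ∈ V, c j with hS
  set S' : ℝ := ∑ j ∈ V', c j with hS'
  set Qa : ℝ := ∑ i, (∑ j, a i j * c j) ^ 2 with hQa
  set Qa' : ℝ := ∑ i, (∑ j, a' i j * c j) ^ 2 with hQa'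
  set Qb' : ℝ := ∑ i, (∑ j, b' i j * c j) ^ 2 with hQb'
  have hQaP : 0 < Qa := Qpos ha hV c hc
  have hQa'P : 0 < Qa' := Qpos ha' hV' c hc
  have hQb'P : 0 < Qb' := Qpos hb' hV' c hc
  have hS'P : 0 < S' := Finset.sum_pos (fun j _ => hc j) hV'
  have hSP : 0 < S := Finset.sum_pos (fun j _ => hc j) hV
  -- cross terms vanish
  have cross : ∀ (x : Matrix (Fin N) (Fin N) ℝ), memA V' x →
      ∀ i, (∑ j, a i j * c j) * (∑ j, x i j * c j) = 0 := by
    intro x hx i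
    by_cases hi : i ∈ V
    · rw [rowZero hx c (Finset.disjoint_left.mp hdisj hi), mul_zero]
    · rw [rowZero ha c hi, zero_mul]
  -- decomposition of Neff for a + x with x supported on V'
  have key : ∀ (x : Matrix (Fin N) (Fin N) ℝ), memA V' x →
      Neff (a + x) c = (S + S') ^ 2 / (Qa + ∑ i, (∑ j, x i j * c j) ^ 2) := by
    intro x hx
    have hrow : ∀ i, ∑ j, (a + x) i j * c j = (∑ j, a i j * c j) + ∑ j, x i j * c j := by
      intro i
      simp [Matrix.add_apply, add_mul, Finset.sum_add_distrib]
    have hnum : ∑ i, ∑ j, (a + x) i j * c j = S + S' := by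
      simp_rw [hrow]
      rw [Finset.sum_add_distrib, sumRows ha c, sumRows hx c]
    have hden : ∑ i, (∑ j, (a + x) i j * c j) ^ 2
        = Qa + ∑ i, (∑ j, x i j * c j) ^ 2 := by
      simp_rw [hrow, add_sq]
      rw [Finset.sum_add_distrib, Finset.sum_add_distrib]
      have : ∑ i, 2 * ((∑ j, a i j * c j) * (∑ j, x i j * c j)) = 0 :=
        Finset.sum_eq_zero fun i _ => by rw [cross x hx i, mul_zero]
      simp_rw [mul_assoc] at this ⊢
      rw [this, add_zero]
    rw [Neff, hnum, hden]
  have ka := key a' ha'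
  have kb := key b' hb'
  -- from h : S'^2/Qa' ≤ S'^2/Qb' deduce Qb' ≤ Qa'
  have hNa' : Neff a' c = S' ^ 2 / Qa' := by
    rw [Neff, sumRows ha' c]
  have hNb' : Neff b' c = S' ^ 2 / Qb' := by
    rw [Neff, sumRows hb' c]
  rw [hNa', hNb', div_le_div_iff₀ hQa'P hQb'P] at h
  have hQle : Qb' ≤ Qa' := le_of_mul_le_mul_left (by linarith [h]) (pow_pos hS'P 2)
  constructor
  · rw [ka, kb]
    gcongr <;> linarith
  · intro heq
    rw [ka, kb, div_eq_div_iff (by linarith) (by linarith)] at heq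
    have hT : (S + S') ^ 2 ≠ 0 := by positivity
    have : Qa + Qb' = Qa + Qa' := by
      have := mul_left_cancel₀ hT (by linarith : (S + S') ^ 2 * (Qa + Qb') = (S + S') ^ 2 * (Qa + Qa'))
      linarith
    have hQeq : Qa' = Qb' := by linarith
    rw [hNa', hNb', hQeq]
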